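/- arXiv:1504.05982 — 3 statements merged into one kernel-verified Lean document; each statement's English description precedes it below -/
import Mathlib

section
/- Suppose a sequence of nonnegative reals n^0, n^1, n^2, … satisfies n^{m+1} ≤ (3/4)·N + (1/4)·n^m + Δt·n^m·G((n^m)^γ) where G is decreasing with G(P_M) = 0, N = n_∞ + 4Δt·sup_{s ≥ 0}(s^{1/γ}G(s)), n_∞ = P_M^{1/γ}, and n^0 ≤ N. Then n^m ≤ N for all m ≥ 0. -/
/-- Scalar recursion of the discrete maximum principle: if
n^{m+1} ≤ (3/4)N + (1/4)n^m + Δt n^m G((n^m)^γ), with G decreasing, G(P_M) = 0,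
N = n_∞ + 4Δt sup_{s≥0} s^{1/γ} G(s), n_∞ = P_M^{1/γ}, and n^0 ≤ N,
then n^m ≤ N for all m. -/
theorem stmt7 (G : ℝ → ℝ) (hGanti : Antitone G)
    (PM : ℝ) (hPM : 0 < PM) (hGPM : G PM = 0)
    (γ Δt : ℝ) (hγ : 1 ≤ γ) (hΔt : 0 < Δt)
    (S : ℝ) (hS : IsLUB ((fun s : ℝ => s ^ (1 / γ) * G s) '' Set.Ici 0) S)
    (ninf N : ℝ) (hninf : ninf = PM ^ (1 / γ)) (hN : N = ninf + 4 * Δt * S)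
    (n : ℕ → ℝ) (hnn : ∀ m, 0 ≤ n m) (h0 : n 0 ≤ N)
    (hrec : ∀ m, n (m + 1) ≤ (3 / 4) * N + (1 / 4) * n m + Δt * n m * G (n m ^ γ)) :
    ∀ m, n m ≤ N := by
  have hγ0 : (0:ℝ) < γ := lt_of_lt_of_le one_pos hγ
  have hγne : γ ≠ 0 := ne_of_gt hγ0
  have hS0 : 0 ≤ S := by
    have h := hS.1 ⟨PM, Set.mem_Ici.mpr hPM.le, rfl⟩
    simpa [hGPM] using h
  intro m
  induction m with
  | zero => exact h0
  | succ m ih =>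
    refine (hrec m).trans ?_
    rcases le_or_gt (n m) ninf with hle | hlt
    · -- n m ≤ ninf : use n m * G(n m ^ γ) ≤ S
      have hmem : ((n m) ^ γ) ∈ Set.Ici (0:ℝ) := Set.mem_Ici.mpr (Real.rpow_nonneg (hnn m) γ)
      have h1 : ((n m) ^ γ) ^ (1/γ) * G ((n m) ^ γ) ≤ S := hS.1 ⟨(n m) ^ γ, hmem, rfl⟩
      have h2 : ((n m) ^ γ) ^ (1/γ) = n m := by
        rw [← Real.rpow_mul (hnn m), mul_one_div_cancel hγne, Real.rpow_one]
      rw [h2] at h1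
      have : Δt * (n m * G ((n m) ^ γ)) ≤ Δt * S := by
        exact mul_le_mul_of_nonneg_left h1 hΔt.le
      nlinarith [this, hle]
    · -- n m > ninf : G(n m ^ γ) ≤ 0
      have hPMle : PM ≤ (n m) ^ γ := by
        have : PM = (PM ^ (1/γ)) ^ γ := by
          rw [← Real.rpow_mul hPM.le, one_div_mul_cancel hγne, Real.rpow_one]
        rw [this]
        exact Real.rpow_le_rpow (Real.rpow_nonneg hPM.le _) (hninf ▸ hlt.le) hγ0.le
      have hG0 : G ((n m) ^ γ) ≤ 0 := hGPM ▸ hGanti hPMle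
      have : Δt * n m * G ((n m) ^ γ) ≤ 0 :=
        mul_nonpos_of_nonneg_of_nonpos (mul_nonneg hΔt.le (hnn m)) hG0
      linarith
end

section
/- Let W : {1,…,N}² → ℝ satisfy −μ Δ_h W + W = p with discrete homogeneous Neumann boundary conditions on a square grid with mesh h, where p_{ij} = |n_{ij}|^γ. Then μ² Σ_{ij} |∇_h² W_{ij}|² h² + 2μ Σ_{ij} |∇_h W_{ij}|² h² + Σ_{ij} |W_{ij}|² h² = Σ_{ij} |n_{ij}|^{2γ} h², where the discrete norms arise from summation by parts. -/
open Finset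

section aux
variable {N : ℕ} [NeZero N]

/-- Forward difference in the first index on a periodic grid. -/
noncomputable def D1p {N : ℕ} (h : ℝ) (f : ZMod N → ZMod N → ℝ) (i j : ZMod N) : ℝ :=
  (f (i + 1) j - f i j) / h

/-- Forward difference in the second index on a periodic grid. -/
noncomputable def D2p {N : ℕ} (h : ℝ) (f : ZMod N → ZMod N → ℝ) (i j : ZMod N) : ℝ :=
  (f i (j + 1) - f i j) / h

/-- Backward difference in the first index on a periodic grid. -/
noncomputable def D1m {N : ℕ} (h : ℝ) (f : ZMod N → ZMod N → ℝ) (i j : ZMod N) : ℝ :=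
  (f i j - f (i - 1) j) / h

/-- Backward difference in the second index on a periodic grid. -/
noncomputable def D2m {N : ℕ} (h : ℝ) (f : ZMod N → ZMod N → ℝ) (i j : ZMod N) : ℝ :=
  (f i j - f i (j - 1)) / h

lemma sum_shift1 (f : ZMod N → ZMod N → ℝ) :
    ∑ i : ZMod N, ∑ j : ZMod N, f (i + 1) j = ∑ i : ZMod N, ∑ j : ZMod N, f i j :=
  Fintype.sum_equiv (Equiv.addRight 1) _ _ (fun _ => rfl)

lemma sum_shift2 (f : ZMod N → ZMod N → ℝ) :
    ∑ i : ZMod N, ∑ j : ZMod N, f i (j + 1) = ∑ i : ZMod N, ∑ j : ZMod N, f i j :=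
  Finset.sum_congr rfl (fun i _ => Fintype.sum_equiv (Equiv.addRight 1) _ _ (fun _ => rfl))

lemma SBP1 (h : ℝ) (F G : ZMod N → ZMod N → ℝ) :
    ∑ i : ZMod N, ∑ j : ZMod N, D1m h F i j * G i j
      = -∑ i : ZMod N, ∑ j : ZMod N, F i j * D1p h G i j := by
  have key : ∑ i : ZMod N, ∑ j : ZMod N, F (i - 1) j * G i j / h
      = ∑ i : ZMod N, ∑ j : ZMod N, F i j * G (i + 1) j / h := by
    have := sum_shift1 (fun i j => F (i - 1) j * G i j / h)
    simpa using this.symm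
  have l : ∀ i j : ZMod N, D1m h F i j * G i j
      = F i j * G i j / h - F (i - 1) j * G i j / h := by
    intro i j; simp only [D1m]; ring
  have r : ∀ i j : ZMod N, F i j * D1p h G i j
      = F i j * G (i + 1) j / h - F i j * G i j / h := by
    intro i j; simp only [D1p]; ring
  simp only [l, r, Finset.sum_sub_distrib]
  linarith [key]

lemma SBP2 (h : ℝ) (F G : ZMod N → ZMod N → ℝ) :
    ∑ i : ZMod N, ∑ j : ZMod N, D2m h F i j * G i j
      = -∑ i : ZMod N, ∑ j : ZMod N, F i j * D2p h G i j := by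
  have key : ∑ i : ZMod N, ∑ j : ZMod N, F i (j - 1) * G i j / h
      = ∑ i : ZMod N, ∑ j : ZMod N, F i j * G i (j + 1) / h := by
    have := sum_shift2 (fun i j => F i (j - 1) * G i j / h)
    simpa using this.symm
  have l : ∀ i j : ZMod N, D2m h F i j * G i j
      = F i j * G i j / h - F i (j - 1) * G i j / h := by
    intro i j; simp only [D2m]; ring
  have r : ∀ i j : ZMod N, F i j * D2p h G i j
      = F i j * G i (j + 1) / h - F i j * G i j / h := by
    intro i j; simp only [D2p]; ring
  simp only [l, r, Finset.sum_sub_distrib]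
  linarith [key]

lemma comm12m (h : ℝ) (f : ZMod N → ZMod N → ℝ) :
    D1p h (D2m h f) = D2m h (D1p h f) := by
  funext i j; simp only [D1p, D2m]; ring

lemma comm21p (h : ℝ) (f : ZMod N → ZMod N → ℝ) :
    D2p h (D1p h f) = D1p h (D2p h f) := by
  funext i j; simp only [D1p, D2p]; ring

end aux

/-- Discrete H² energy identity for −μΔ_h W + W = p, p = |n|^γ, on a periodic grid:
μ² Σ|∇_h²W|² h² + 2μ Σ|∇_hW|² h² + Σ|W|² h² = Σ|n|^{2γ} h², where all the discrete
norms arise from summation by parts. -/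
theorem stmt10 (N : ℕ) [NeZero N] (μ h γ : ℝ) (hμ : 0 < μ) (hh : 0 < h) (hγ : 1 ≤ γ)
    (W n p : ZMod N → ZMod N → ℝ)
    (hp : ∀ i j, p i j = |n i j| ^ γ)
    (heq : ∀ i j, -μ * (D1m h (D1p h W) i j + D2m h (D2p h W) i j) + W i j = p i j) :
    μ ^ 2 * ∑ i : ZMod N, ∑ j : ZMod N,
        ((D1m h (D1p h W) i j) ^ 2 + (D2m h (D2p h W) i j) ^ 2
          + 2 * (D1p h (D2p h W) i j) ^ 2) * h ^ 2
      + 2 * μ * ∑ i : ZMod N, ∑ j : ZMod N,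
          ((D1p h W i j) ^ 2 + (D2p h W i j) ^ 2) * h ^ 2
      + ∑ i : ZMod N, ∑ j : ZMod N, (W i j) ^ 2 * h ^ 2
      = ∑ i : ZMod N, ∑ j : ZMod N, |n i j| ^ (2 * γ) * h ^ 2 := by
  set A := D1m h (D1p h W) with hA
  set B := D2m h (D2p h W) with hB
  set C := D1p h (D2p h W) with hC
  -- |n|^{2γ} = p^2
  have hn2 : ∀ i j, |n i j| ^ (2 * γ) = (p i j) ^ 2 := by
    intro i j
    rw [hp i j, mul_comm (2:ℝ) γ, Real.rpow_mul (abs_nonneg _)]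
    rw [show ((2:ℝ)) = ((2:ℕ):ℝ) by norm_num, Real.rpow_natCast]
  -- cross term in the gradient part
  have hAW : ∑ i : ZMod N, ∑ j : ZMod N, A i j * W i j
      = -∑ i : ZMod N, ∑ j : ZMod N, (D1p h W i j) ^ 2 := by
    rw [hA, SBP1 h (D1p h W) W]
    congr 1; apply Finset.sum_congr rfl; intro i _; apply Finset.sum_congr rfl; intro j _
    ring
  have hBW : ∑ i : ZMod N, ∑ j : ZMod N, B i j * W i j
      = -∑ i : ZMod N, ∑ j : ZMod N, (D2p h W i j) ^ 2 := by
    rw [hB, SBP2 h (D2p h W) W]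
    congr 1; apply Finset.sum_congr rfl; intro i _; apply Finset.sum_congr rfl; intro j _
    ring
  -- cross term in the Hessian part
  have hAB : ∑ i : ZMod N, ∑ j : ZMod N, A i j * B i j
      = ∑ i : ZMod N, ∑ j : ZMod N, (C i j) ^ 2 := by
    rw [hA, hB, SBP1 h (D1p h W) (D2m h (D2p h W))]
    have e1 : ∀ i j : ZMod N, D1p h W i j * D1p h (D2m h (D2p h W)) i j
        = D2m h (D1p h (D2p h W)) i j * D1p h W i j := by
      intro i j; rw [comm12m]; ring
    simp only [e1]
    rw [SBP2 h (D1p h (D2p h W)) (D1p h W), neg_neg]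
    apply Finset.sum_congr rfl; intro i _; apply Finset.sum_congr rfl; intro j _
    rw [comm21p, hC]; ring
  -- expand p^2 pointwise
  have expand : ∀ i j : ZMod N, (p i j) ^ 2 * h ^ 2
      = (μ^2 * (A i j)^2) * h^2 + (μ^2 * (B i j)^2) * h^2 + (2*μ^2 * (A i j * B i j)) * h^2
        - (2*μ * (A i j * W i j)) * h^2 - (2*μ * (B i j * W i j)) * h^2
        + (W i j)^2 * h^2 := by
    intro i j; rw [← heq i j]; ring
  simp only [hn2]
  calc μ ^ 2 * ∑ i : ZMod N, ∑ j : ZMod N,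
        ((A i j) ^ 2 + (B i j) ^ 2 + 2 * (C i j) ^ 2) * h ^ 2
      + 2 * μ * ∑ i : ZMod N, ∑ j : ZMod N,
          ((D1p h W i j) ^ 2 + (D2p h W i j) ^ 2) * h ^ 2
      + ∑ i : ZMod N, ∑ j : ZMod N, (W i j) ^ 2 * h ^ 2
      = ∑ i : ZMod N, ∑ j : ZMod N,
          ((μ^2 * (A i j)^2) * h^2 + (μ^2 * (B i j)^2) * h^2 + (2*μ^2 * (A i j * B i j)) * h^2
            - (2*μ * (A i j * W i j)) * h^2 - (2*μ * (B i j * W i j)) * h^2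
            + (W i j)^2 * h^2) := by
        simp only [Finset.sum_add_distrib, Finset.sum_sub_distrib, ← Finset.mul_sum,
          ← Finset.sum_mul]
        linear_combination (2 * μ * hAW + 2 * μ * hBW - 2 * μ^2 * hAB) * h^2
    _ = ∑ i : ZMod N, ∑ j : ZMod N, (p i j) ^ 2 * h ^ 2 := by
        apply Finset.sum_congr rfl; intro i _; apply Finset.sum_congr rfl; intro j _
        exact (expand i j).symm
end

section
/- Let g : [0,∞) → ℝ be continuous with g(s) ≤ 0 for s ≥ P_M and arbitrary for s < P_M, let γ ≥ 1, μ > 0, and suppose the C¹ function m : [0,T] → [0,∞) satisfies m'(t) ≤ m(t)g(m(t)^γ) + (1/μ)m(t)(m(t)^γ − M(t)) for all t where m(t)^γ ≤ M(t) ≤ max over time of m^γ. If m(0)^γ ≤ P_M then m(t)^γ ≤ P_M for all t ∈ [0,T]. -/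
/-- ODE comparison bounding the maximal density: if g ≤ 0 on [P_M, ∞),
m'(t) ≤ m(t)g(m(t)^γ) + (1/μ)m(t)(m(t)^γ − M(t)) with m ≥ 0,
m(t)^γ ≤ M(t) ≤ sup over [0,T] of m^γ, and m(0)^γ ≤ P_M,
then m(t)^γ ≤ P_M on [0,T]. -/
theorem stmt17 (T PM μc γ : ℝ) (hT : 0 < T) (hPM : 0 < PM) (hμ : 0 < μc) (hγ : 1 ≤ γ)
    (g : ℝ → ℝ) (hgc : ContinuousOn g (Set.Ici 0))
    (hg : ∀ s : ℝ, PM ≤ s → g s ≤ 0)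
    (m m' M : ℝ → ℝ)
    (hm : ∀ t ∈ Set.Icc (0 : ℝ) T, HasDerivAt m (m' t) t)
    (hmnn : ∀ t ∈ Set.Icc (0 : ℝ) T, 0 ≤ m t)
    (hMl : ∀ t ∈ Set.Icc (0 : ℝ) T, m t ^ γ ≤ M t)
    (hMu : ∀ t ∈ Set.Icc (0 : ℝ) T,
      M t ≤ sSup ((fun s => m s ^ γ) '' Set.Icc (0 : ℝ) T))
    (hineq : ∀ t ∈ Set.Icc (0 : ℝ) T,
      m' t ≤ m t * g (m t ^ γ) + (1 / μc) * m t * (m t ^ γ - M t))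
    (h0 : m 0 ^ γ ≤ PM) :
    ∀ t ∈ Set.Icc (0 : ℝ) T, m t ^ γ ≤ PM := by
  have hγ0 : (0:ℝ) < γ := lt_of_lt_of_le one_pos hγ
  set c := PM ^ (1/γ) with hcdef
  have hc0 : 0 < c := Real.rpow_pos_of_pos hPM _
  have hcγ : c ^ γ = PM := by
    rw [hcdef, ← Real.rpow_mul hPM.le, one_div_mul_cancel hγ0.ne', Real.rpow_one]
  -- main claim: m ≤ c on [0,T]
  have key : ∀ t ∈ Set.Icc (0 : ℝ) T, m t ≤ c := by
    intro t0 ht0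
    by_contra hlt
    push_neg at hlt
    have hm0 : m 0 ≤ c := by
      by_contra h
      push_neg at h
      have := Real.rpow_lt_rpow hc0.le h hγ0
      rw [hcγ] at this
      exact absurd h0 (not_le.mpr this)
    set S : Set ℝ := {t ∈ Set.Icc (0:ℝ) t0 | m t ≤ c} with hSdef
    have h0S : (0:ℝ) ∈ S := ⟨⟨le_refl _, ht0.1⟩, hm0⟩
    have hSne : S.Nonempty := ⟨0, h0S⟩
    have hSbdd : BddAbove S := ⟨t0, fun x hx => hx.1.2⟩
    have hsub : Set.Icc (0:ℝ) t0 ⊆ Set.Icc (0:ℝ) T :=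
      Set.Icc_subset_Icc le_rfl ht0.2
    have hcont : ContinuousOn m (Set.Icc (0:ℝ) t0) := fun x hx =>
      ((hm x (hsub hx)).continuousAt).continuousWithinAt
    have hSclosed : IsClosed S := by
      have : S = Set.Icc (0:ℝ) t0 ∩ m ⁻¹' Set.Iic c := by
        ext x; simp [hSdef, Set.mem_preimage, and_comm]
      rw [this]
      exact hcont.preimage_isClosed_of_isClosed isClosed_Icc isClosed_Iic
    set s := sSup S with hsdef
    have hsS : s ∈ S := hSclosed.csSup_mem hSne hSbdd
    have hst0 : s < t0 := lt_of_le_of_ne (hsS.1.2) (by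
      intro h
      exact absurd hsS.2 (not_le.mpr (h ▸ hlt)))
    have hs0 : 0 ≤ s := hsS.1.1
    have hgt : ∀ x ∈ Set.Ioc s t0, c < m x := by
      intro x hx
      by_contra h
      push_neg at h
      have hxS : x ∈ S := ⟨⟨hs0.trans hx.1.le, hx.2⟩, h⟩
      exact absurd (le_csSup hSbdd hxS) (not_le.mpr hx.1)
    have hsubI : Set.Icc s t0 ⊆ Set.Icc (0:ℝ) T :=
      Set.Icc_subset_Icc hs0 ht0.2
    have hanti : AntitoneOn m (Set.Icc s t0) := by
      apply antitoneOn_of_deriv_nonpos (convex_Icc s t0)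
        (fun x hx => ((hm x (hsubI hx)).continuousAt).continuousWithinAt)
      · intro x hx
        rw [interior_Icc] at hx
        exact ((hm x (hsubI ⟨hx.1.le, hx.2.le⟩)).differentiableAt).differentiableWithinAt
      · intro x hx
        rw [interior_Icc] at hx
        have hxT : x ∈ Set.Icc (0:ℝ) T := hsubI ⟨hx.1.le, hx.2.le⟩
        rw [(hm x hxT).deriv]
        have hmx : 0 ≤ m x := hmnn x hxT
        have hPMlt : PM < m x ^ γ := by
          have := Real.rpow_lt_rpow hc0.le (hgt x ⟨hx.1, hx.2.le⟩) hγ0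
          rwa [hcγ] at this
        have h1 : m x * g (m x ^ γ) ≤ 0 :=
          mul_nonpos_of_nonneg_of_nonpos hmx (hg _ hPMlt.le)
        have h2 : (1 / μc) * m x * (m x ^ γ - M x) ≤ 0 :=
          mul_nonpos_of_nonneg_of_nonpos
            (mul_nonneg (by positivity) hmx) (sub_nonpos.mpr (hMl x hxT))
        linarith [hineq x hxT]
    have : m t0 ≤ m s :=
      hanti ⟨le_rfl, hst0.le⟩ ⟨hst0.le, le_rfl⟩ hst0.le
    exact absurd (this.trans hsS.2) (not_le.mpr hlt)
  intro t ht
  have := Real.rpow_le_rpow (hmnn t ht) (key t ht) hγ0.le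
  rwa [hcγ] at this
end
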